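/- Let t ≥ 2 and q ≥ 2 be integers, let G be a finite t-broom-free graph, and let V_1, …, V_q be pairwise disjoint nonempty independent sets in G with |V_q| = t such that Q := G[V_1 ∪ ⋯ ∪ V_q] is a complete q-partite graph with parts V_1, …, V_q. Let Z = {v ∈ N(V(Q)) : v is complete to V_q}, let W = {v ∈ N(V(Q)) : v is anticomplete to V_q}, and for each I ⊆ V_1 ∪ ⋯ ∪ V_{q-1} let W_I = {v ∈ W : v is complete to I and anticomplete to (V_1 ∪ ⋯ ∪ V_{q-1}) \ I}. Let I ⊆ V_1 ∪ ⋯ ∪ V_{q-1} and let X_I be a connected component of G[W_I] whose vertex set contains an independent set of size t, and set Z_{X_I} = {z ∈ Z : z is complete to V(X_I)}. Then Z_{X_I} is complete to Z \ Z_{X_I}. -/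

import Mathlib

open SimpleGraph

/-- The `t`-broom: `K_{1,t+1}` with one edge subdivided once.
Vertex `0` is `u₀`, vertex `1` is `v₁`, vertex `2` is `v₂`,
and vertices `3, …, t+2` are `u₁, …, u_t`. -/
def tBroom (t : ℕ) : SimpleGraph (Fin (t + 3)) :=
  SimpleGraph.fromRel (fun a b =>
    (a = 0 ∧ b = 1) ∨ (a = 1 ∧ b = 2) ∨ (a = 0 ∧ 3 ≤ b.val))

/-- `G` is `H`-free: no induced subgraph of `G` is isomorphic to `H`.
(A graph embedding `H ↪g G` is exactly an isomorphism of `H` onto an induced subgraph of `G`.) -/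
def Free {V W : Type*} (G : SimpleGraph V) (H : SimpleGraph W) : Prop :=
  ¬ Nonempty (H ↪g G)

/-- The neighborhood `N(S)` of a set `S`: vertices outside `S` with a neighbor in `S`. -/
def nbhd {V : Type*} (G : SimpleGraph V) (S : Set V) : Set V :=
  {v | v ∉ S ∧ ∃ u ∈ S, G.Adj u v}

/-- `v` is complete to `S`: adjacent to every vertex of `S`. -/
def CompleteTo {V : Type*} (G : SimpleGraph V) (v : V) (S : Set V) : Prop :=
  ∀ u ∈ S, G.Adj v u

/-- `v` is anticomplete to `S`: adjacent to no vertex of `S`. -/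
def AnticompleteTo {V : Type*} (G : SimpleGraph V) (v : V) (S : Set V) : Prop :=
  ∀ u ∈ S, ¬ G.Adj v u

/-- `v` is neutral to `S`: neither complete nor anticomplete to `S`. -/
def NeutralTo {V : Type*} (G : SimpleGraph V) (v : V) (S : Set V) : Prop :=
  ¬ CompleteTo G v S ∧ ¬ AnticompleteTo G v S

/-- `S` is an independent set of size `s` in `G`. -/
def IsNIndepSet' {V : Type*} (G : SimpleGraph V) (s : ℕ) (S : Finset V) : Prop :=
  S.card = s ∧ ∀ u ∈ S, ∀ v ∈ S, u ≠ v → ¬ G.Adj u v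

/-- `R` has the Ramsey property for `(s, n)`: every finite simple graph on at least `R`
vertices contains an independent set of size `s` or a clique of size `n`. -/
def RamseyProp (R s n : ℕ) : Prop :=
  ∀ (W : Type) [Fintype W] (H : SimpleGraph W), R ≤ Fintype.card W →
    (∃ S : Finset W, IsNIndepSet' H s S) ∨ (∃ S : Finset W, H.IsNClique n S)

/-- The distance (in `ℕ∞`) from a set `S` to a vertex `v`:
the minimum over `u ∈ S` of the distance from `u` to `v`. -/
noncomputable def eDistSet {V : Type*} (G : SimpleGraph V) (S : Set V) (v : V) : ℕ∞ :=
  ⨅ u ∈ S, G.edist u v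

/-- `N^i(S)`: the set of vertices (outside `S`) at distance exactly `i` from `S`. -/
noncomputable def distNbhd {V : Type*} (G : SimpleGraph V) (S : Set V) (i : ℕ) : Set V :=
  {v | v ∉ S ∧ eDistSet G S v = (i : ℕ∞)}

/-- `N^{≥ i}(S) = ⋃_{j ≥ i} N^j(S)`. -/
noncomputable def distNbhdGe {V : Type*} (G : SimpleGraph V) (S : Set V) (i : ℕ) : Set V :=
  ⋃ j ∈ {j : ℕ | i ≤ j}, distNbhd G S j

/-- Given the union `U = V_1 ∪ ⋯ ∪ V_{q-1}` and the last part `Vq`, the set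
`W_I = {v ∈ W : v complete to I, anticomplete to U \ I}`, where
`W = {v ∈ N(U ∪ Vq) : v anticomplete to Vq}`. -/
def Wpart {V : Type*} (G : SimpleGraph V) (U Vq I : Set V) : Set V :=
  {v ∈ nbhd G (U ∪ Vq) | AnticompleteTo G v Vq ∧ CompleteTo G v I ∧
    AnticompleteTo G v (U \ I)}

lemma tBroom_adj' {t : ℕ} (a b : Fin (t+3)) : (tBroom t).Adj a b ↔ a ≠ b ∧
    ((((a:ℕ) = 0 ∧ (b:ℕ) = 1) ∨ ((a:ℕ) = 1 ∧ (b:ℕ) = 2) ∨ ((a:ℕ) = 0 ∧ 3 ≤ b.val)) ∨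
     (((b:ℕ) = 0 ∧ (a:ℕ) = 1) ∨ ((b:ℕ) = 1 ∧ (a:ℕ) = 2) ∨ ((b:ℕ) = 0 ∧ 3 ≤ a.val))) := by
  simp only [tBroom, fromRel_adj, Fin.ext_iff, ne_eq, Fin.val_zero, Fin.val_one, Fin.val_two]

def broomMap' {V : Type*} {t : ℕ} (u0 v1 v2 : V) (u : Fin t → V) (i : Fin (t+3)) : V :=
  if h0 : i.val = 0 then u0 else if h1 : i.val = 1 then v1 else if h2 : i.val = 2 then v2
  else u ⟨i.val - 3, by have := i.isLt; omega⟩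

lemma exists_broom' {V : Type*} (G : SimpleGraph V) (t : ℕ)
    (u0 v1 v2 : V) (u : Fin t → V) (hu : Function.Injective u)
    (h01 : G.Adj u0 v1) (h12 : G.Adj v1 v2) (h0u : ∀ i, G.Adj u0 (u i))
    (h02 : ¬ G.Adj u0 v2) (h1u : ∀ i, ¬ G.Adj v1 (u i)) (h2u : ∀ i, ¬ G.Adj v2 (u i))
    (huu : ∀ i j, i ≠ j → ¬ G.Adj (u i) (u j))
    (ne02 : u0 ≠ v2) (ne1u : ∀ i, v1 ≠ u i) (ne2u : ∀ i, v2 ≠ u i) :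
    Nonempty (tBroom t ↪g G) := by
  set f := broomMap' u0 v1 v2 u with hfdef
  have hval : ∀ (i : Fin (t+3)) (h : 3 ≤ i.val),
      f i = u ⟨i.val - 3, by have := i.isLt; omega⟩ := by
    intro i h
    simp only [hfdef, broomMap']
    rw [dif_neg (by omega), dif_neg (by omega), dif_neg (by omega)]
  have hf0 : ∀ (i : Fin (t+3)), i.val = 0 → f i = u0 := by
    intro i h; simp only [hfdef, broomMap']; rw [dif_pos h]
  have hf1 : ∀ (i : Fin (t+3)), i.val = 1 → f i = v1 := by
    intro i h; simp only [hfdef, broomMap']; rw [dif_neg (by omega), dif_pos h]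
  have hf2 : ∀ (i : Fin (t+3)), i.val = 2 → f i = v2 := by
    intro i h; simp only [hfdef, broomMap']
    rw [dif_neg (by omega), dif_neg (by omega), dif_pos h]
  have ne01 : u0 ≠ v1 := h01.ne
  have ne12 : v1 ≠ v2 := h12.ne
  have ne0u : ∀ i, u0 ≠ u i := fun i => (h0u i).ne
  have hclass : ∀ a : Fin (t+3), ((a:ℕ) = 0 ∧ f a = u0) ∨ ((a:ℕ) = 1 ∧ f a = v1) ∨
      ((a:ℕ) = 2 ∧ f a = v2) ∨ (∃ i : Fin t, (a:ℕ) = (i:ℕ) + 3 ∧ f a = u i) := by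
    intro a
    rcases Nat.lt_or_ge a.val 3 with ha3 | ha3
    · interval_cases h : a.val
      · exact Or.inl ⟨rfl, hf0 a h⟩
      · exact Or.inr (Or.inl ⟨rfl, hf1 a h⟩)
      · exact Or.inr (Or.inr (Or.inl ⟨rfl, hf2 a h⟩))
    · refine Or.inr (Or.inr (Or.inr ⟨⟨a.val - 3, by have := a.isLt; omega⟩, by simp; omega,
        hval a ha3⟩))
  have hinj : Function.Injective f := by
    intro a b hab
    rcases hclass a with ⟨ha, ea⟩|⟨ha, ea⟩|⟨ha, ea⟩|⟨i, ha, ea⟩ <;>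
      rcases hclass b with ⟨hb, eb⟩|⟨hb, eb⟩|⟨hb, eb⟩|⟨j, hb, eb⟩ <;>
      rw [ea, eb] at hab <;>
      first
        | (exact Fin.ext (by omega))
        | (exact Fin.ext (by have := congrArg Fin.val (hu hab); omega))
        | (exact absurd hab ne01) | (exact absurd hab ne12) | (exact absurd hab ne02)
        | (exact absurd hab ne01.symm) | (exact absurd hab ne12.symm)
        | (exact absurd hab ne02.symm)
        | (exact absurd hab (ne0u _)) | (exact absurd hab (ne1u _))
        | (exact absurd hab (ne2u _))
        | (exact absurd hab (ne0u _).symm) | (exact absurd hab (ne1u _).symm)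
        | (exact absurd hab (ne2u _).symm)
  have key : ∀ a b : Fin (t+3), G.Adj (f a) (f b) ↔ (tBroom t).Adj a b := by
    intro a b
    rw [tBroom_adj']
    have hadj_ne : ∀ x y : Fin (t+3), (x:ℕ) ≠ (y:ℕ) → x ≠ y :=
      fun x y h => fun e => h (congrArg Fin.val e)
    rcases hclass a with ⟨ha, ea⟩|⟨ha, ea⟩|⟨ha, ea⟩|⟨i, ha, ea⟩ <;>
      rcases hclass b with ⟨hb, eb⟩|⟨hb, eb⟩|⟨hb, eb⟩|⟨j, hb, eb⟩ <;>
      rw [ea, eb]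
    -- (0,0)
    · exact iff_of_false (G.irrefl) (by rintro ⟨h, -⟩; exact h (Fin.ext (by omega)))
    -- (0,1)
    · exact iff_of_true h01 ⟨hadj_ne _ _ (by omega), by omega⟩
    -- (0,2)
    · exact iff_of_false h02 (by rintro ⟨-, h⟩; rcases h with (⟨h1,h2⟩|⟨h1,h2⟩|⟨h1,h2⟩)|(⟨h1,h2⟩|⟨h1,h2⟩|⟨h1,h2⟩) <;> omega)
    -- (0,u)
    · exact iff_of_true (h0u j) ⟨hadj_ne _ _ (by omega), by omega⟩
    -- (1,0)
    · exact iff_of_true h01.symm ⟨hadj_ne _ _ (by omega), by omega⟩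
    -- (1,1)
    · exact iff_of_false (G.irrefl) (by rintro ⟨h, -⟩; exact h (Fin.ext (by omega)))
    -- (1,2)
    · exact iff_of_true h12 ⟨hadj_ne _ _ (by omega), by omega⟩
    -- (1,u)
    · exact iff_of_false (h1u j) (by rintro ⟨-, h⟩; rcases h with (⟨h1,h2⟩|⟨h1,h2⟩|⟨h1,h2⟩)|(⟨h1,h2⟩|⟨h1,h2⟩|⟨h1,h2⟩) <;> omega)
    -- (2,0)
    · exact iff_of_false (fun h => h02 h.symm) (by rintro ⟨-, h⟩; rcases h with (⟨h1,h2⟩|⟨h1,h2⟩|⟨h1,h2⟩)|(⟨h1,h2⟩|⟨h1,h2⟩|⟨h1,h2⟩) <;> omega)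
    -- (2,1)
    · exact iff_of_true h12.symm ⟨hadj_ne _ _ (by omega), by omega⟩
    -- (2,2)
    · exact iff_of_false (G.irrefl) (by rintro ⟨h, -⟩; exact h (Fin.ext (by omega)))
    -- (2,u)
    · exact iff_of_false (h2u j) (by rintro ⟨-, h⟩; rcases h with (⟨h1,h2⟩|⟨h1,h2⟩|⟨h1,h2⟩)|(⟨h1,h2⟩|⟨h1,h2⟩|⟨h1,h2⟩) <;> omega)
    -- (u,0)
    · exact iff_of_true (h0u i).symm ⟨hadj_ne _ _ (by omega), by omega⟩
    -- (u,1)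
    · exact iff_of_false (fun h => h1u i h.symm) (by rintro ⟨-, h⟩; rcases h with (⟨h1,h2⟩|⟨h1,h2⟩|⟨h1,h2⟩)|(⟨h1,h2⟩|⟨h1,h2⟩|⟨h1,h2⟩) <;> omega)
    -- (u,2)
    · exact iff_of_false (fun h => h2u i h.symm) (by rintro ⟨-, h⟩; rcases h with (⟨h1,h2⟩|⟨h1,h2⟩|⟨h1,h2⟩)|(⟨h1,h2⟩|⟨h1,h2⟩|⟨h1,h2⟩) <;> omega)
    -- (u,u)
    · refine iff_of_false ?_ (by rintro ⟨-, h⟩; rcases h with (⟨h1,h2⟩|⟨h1,h2⟩|⟨h1,h2⟩)|(⟨h1,h2⟩|⟨h1,h2⟩|⟨h1,h2⟩) <;> omega)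
      by_cases hij : i = j
      · subst hij; exact G.irrefl
      · exact huu i j hij
  exact ⟨{ toFun := f, inj' := hinj, map_rel_iff' := fun {a b} => key a b }⟩

lemma walk_switch' {V : Type*} {H : SimpleGraph V} (P : V → Prop) :
    ∀ {a b : V}, H.Walk a b → P a → ¬ P b → ∃ x y, H.Adj x y ∧ P x ∧ ¬ P y := by
  intro a b p
  induction p with
  | nil => intro h h'; exact absurd h h'
  | @cons u v w hadj p ih =>
    intro ha hb
    by_cases h : P v
    · exact ih h hb
    · exact ⟨u, v, hadj, ha, h⟩

/-- Lemma 2.2(iii). With the same setup, if a connected component `X_I`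
of `G[W_I]` contains an independent set of size `t`, then
`Z_{X_I} = {z ∈ Z : z complete to V(X_I)}` is complete to `Z \ Z_{X_I}`. -/
theorem ZX_complete_to_complement (t q : ℕ) (ht : 2 ≤ t) (hq : 2 ≤ q)
    (V : Type) [Fintype V] (G : SimpleGraph V) (hfree : _root_.Free G (tBroom t))
    (Vs : Fin (q - 1) → Set V) (Vq : Set V)
    (hne : ∀ i, (Vs i).Nonempty) (hVq : Vq.ncard = t)
    (hdisj : ∀ i j, i ≠ j → Disjoint (Vs i) (Vs j))
    (hdisjq : ∀ i, Disjoint (Vs i) Vq)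
    (hindep : ∀ i, ∀ u ∈ Vs i, ∀ w ∈ Vs i, ¬ G.Adj u w)
    (hindepq : ∀ u ∈ Vq, ∀ w ∈ Vq, ¬ G.Adj u w)
    (hcomp : ∀ i j, i ≠ j → ∀ u ∈ Vs i, ∀ w ∈ Vs j, G.Adj u w)
    (hcompq : ∀ i, ∀ u ∈ Vs i, ∀ w ∈ Vq, G.Adj u w)
    (I : Set V) (hI : I ⊆ (⋃ i, Vs i))
    (C : (G.induce (Wpart G (⋃ i, Vs i) Vq I)).ConnectedComponent)
    (hindepC : ∃ T : Finset V, IsNIndepSet' G t T ∧ ↑T ⊆ Subtype.val '' C.supp) :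
    ∀ z ∈ {v ∈ nbhd G ((⋃ i, Vs i) ∪ Vq) | CompleteTo G v Vq ∧
            CompleteTo G v (Subtype.val '' C.supp)},
      ∀ z' ∈ {v ∈ nbhd G ((⋃ i, Vs i) ∪ Vq) | CompleteTo G v Vq} \
             {v ∈ nbhd G ((⋃ i, Vs i) ∪ Vq) | CompleteTo G v Vq ∧
               CompleteTo G v (Subtype.val '' C.supp)},
        G.Adj z z' := by

  intro z hz z' hz'
  by_contra hnadj
  have hznb : z ∈ nbhd G ((⋃ i, Vs i) ∪ Vq) := hz.1
  have hzVq : CompleteTo G z Vq := hz.2.1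
  have hzS : CompleteTo G z (Subtype.val '' C.supp) := hz.2.2
  have hz'nb : z' ∈ nbhd G ((⋃ i, Vs i) ∪ Vq) := hz'.1.1
  have hz'Vq : CompleteTo G z' Vq := hz'.1.2
  have hz'not : ¬ (z' ∈ nbhd G ((⋃ i, Vs i) ∪ Vq) ∧ CompleteTo G z' Vq ∧ CompleteTo G z' (Subtype.val '' C.supp)) := hz'.2
  have hz'nc : ¬ CompleteTo G z' (Subtype.val '' C.supp) := fun h => hz'not ⟨hz'nb, hz'Vq, h⟩
  have hVqne : Vq.Nonempty := by
    apply Set.nonempty_of_ncard_ne_zero; omega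
  obtain ⟨w0, hw0⟩ := hVqne
  have hSW : (Subtype.val '' C.supp) ⊆ (Wpart G (⋃ i, Vs i) Vq I) := by
    rintro x ⟨y, -, rfl⟩; exact y.2
  have hWanti : ∀ x ∈ (Wpart G (⋃ i, Vs i) Vq I), AnticompleteTo G x Vq := fun x hx => hx.2.1
  have hWnVq : ∀ x ∈ (Wpart G (⋃ i, Vs i) Vq I), x ∉ Vq := fun x hx h => hx.1.1 (Or.inr h)
  have hzz' : z ≠ z' := by
    rintro rfl; exact hz'not ⟨hznb, hzVq, hzS⟩
  have hneW : ∀ x ∈ (Wpart G (⋃ i, Vs i) Vq I), z' ≠ x := by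
    intro x hx h
    exact hWanti x hx w0 hw0 (h ▸ hz'Vq w0 hw0)
  by_cases hanti : ∀ y ∈ (Subtype.val '' C.supp), ¬ G.Adj z' y
  · -- Case A : z' anticomplete to (Subtype.val '' C.supp); broom centered at z
    obtain ⟨T, ⟨hTcard, hTind⟩, hTS⟩ := hindepC
    set u : Fin t → V := fun i => (T.equivFin.symm (Fin.cast hTcard.symm i)).val with hu
    have humem : ∀ i, u i ∈ T := fun i => (T.equivFin.symm _).2
    have huinj : Function.Injective u := by
      intro i j hij
      have := T.equivFin.symm.injective (Subtype.ext hij)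
      simpa [Fin.ext_iff] using congrArg Fin.val this
    have huS : ∀ i, (u i) ∈ (Subtype.val '' C.supp) := fun i => hTS (humem i)
    refine hfree (exists_broom' G t z w0 z' u huinj ?_ ?_ ?_ ?_ ?_ ?_ ?_ ?_ ?_ ?_)
    · exact hzVq w0 hw0
    · exact (hz'Vq w0 hw0).symm
    · exact fun i => hzS _ (huS i)
    · exact hnadj
    · exact fun i => fun h => hWanti _ (hSW (huS i)) w0 hw0 h.symm
    · exact fun i => hanti _ (huS i)
    · exact fun i j hij => hTind _ (humem i) _ (humem j) (fun h => hij (huinj h))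
    · exact hzz'
    · exact fun i h => hWnVq _ (hSW (huS i)) (h ▸ hw0)
    · exact fun i => hneW _ (hSW (huS i))
  · -- Case B : z' has a neighbor in (Subtype.val '' C.supp); broom centered at z'
    push_neg at hanti
    obtain ⟨a, haS, haAdj⟩ := hanti
    have : ∃ b ∈ (Subtype.val '' C.supp), ¬ G.Adj z' b := by
      by_contra h; push_neg at h; exact hz'nc h
    obtain ⟨b, hbS, hbAdj⟩ := this
    obtain ⟨a', ha'C, rfl⟩ := haS
    obtain ⟨b', hb'C, rfl⟩ := hbS
    have hreach : (G.induce (Wpart G (⋃ i, Vs i) Vq I)).Reachable a' b' := by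
      have h1 : (G.induce (Wpart G (⋃ i, Vs i) Vq I)).connectedComponentMk a' = C := ha'C
      have h2 : (G.induce (Wpart G (⋃ i, Vs i) Vq I)).connectedComponentMk b' = C := hb'C
      exact ConnectedComponent.exact (h1.trans h2.symm)
    obtain ⟨p⟩ := hreach
    obtain ⟨x, y, hxy, hx, hy⟩ :=
      walk_switch' (fun v : (Wpart G (⋃ i, Vs i) Vq I) => G.Adj z' v.val) p haAdj hbAdj
    have hxyAdj : G.Adj (x : V) (y : V) := hxy
    -- enumerate Vq
    have hfin : Vq.Finite := Set.toFinite Vq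
    have hcard : hfin.toFinset.card = t := by
      rw [← Set.ncard_eq_toFinset_card Vq hfin]; exact hVq
    set u : Fin t → V := fun i => (hfin.toFinset.equivFin.symm (Fin.cast hcard.symm i)).val
      with hudef
    have humem : ∀ i, u i ∈ Vq := fun i => by
      have := (hfin.toFinset.equivFin.symm (Fin.cast hcard.symm i)).2
      rwa [Set.Finite.mem_toFinset] at this
    have huinj : Function.Injective u := by
      intro i j hij
      have := hfin.toFinset.equivFin.symm.injective (Subtype.ext hij)
      simpa [Fin.ext_iff] using congrArg Fin.val this
    refine hfree (exists_broom' G t z' (x : V) (y : V) u huinj ?_ ?_ ?_ ?_ ?_ ?_ ?_ ?_ ?_ ?_)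
    · exact hx
    · exact hxyAdj
    · exact fun i => hz'Vq _ (humem i)
    · exact hy
    · exact fun i => hWanti _ x.2 _ (humem i)
    · exact fun i => hWanti _ y.2 _ (humem i)
    · exact fun i j hij => hindepq _ (humem i) _ (humem j)
    · exact hneW _ y.2
    · exact fun i h => hWnVq _ x.2 (h ▸ humem i)
    · exact fun i h => hWnVq _ y.2 (h ▸ humem i)
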